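/- Suppose m ≥ 3. Let a ∈ B_int, let b ∈ B_half, let i₁, i₂ ∉ S be two distinct indices, and let F = {x ∈ B_half : x k = b k for all k ∉ {i₁, i₂}} (a set of four points forming a square two-dimensional face of the half-integer cube). Then convexHull ℝ ({a} ∪ F) is a face of the Delone polytope of D_{2m}^* centered at u, i.e. IsExtreme ℝ (convexHull ℝ (B_int ∪ B_half)) (convexHull ℝ ({a} ∪ F)); moreover a does not lie in the affine span of F, so this face is a pyramid over a parallelogram with apex a. -/

import Mathlib

set_option maxHeartbeats 1000000

open Finset

/-- The affine functional `x ↦ ∑ j, c j * (x j - u j)` on Euclidean space. -/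
noncomputable def coordComb {n : ℕ} (c u : Fin n → ℝ) :
    EuclideanSpace ℝ (Fin n) →ᵃ[ℝ] ℝ where
  toFun x := ∑ j, c j * (x j - u j)
  linear :=
    { toFun := fun x => ∑ j, c j * x j
      map_add' := by
        intro x y
        simp only [PiLp.add_apply, mul_add, Finset.sum_add_distrib]
      map_smul' := by
        intro r x
        simp only [PiLp.smul_apply, smul_eq_mul, RingHom.id_apply, Finset.mul_sum]
        exact Finset.sum_congr rfl fun j _ => by ring }
  map_vadd' := by
    intro p v
    simp only [LinearMap.coe_mk, AddHom.coe_mk, vadd_eq_add, PiLp.add_apply]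
    rw [← Finset.sum_add_distrib]
    exact Finset.sum_congr rfl fun j _ => by ring

lemma coordComb_apply {n : ℕ} (c u : Fin n → ℝ) (x : EuclideanSpace ℝ (Fin n)) :
    coordComb c u x = ∑ j, c j * (x j - u j) := rfl

lemma half_mul_le {p q : ℝ} (hp : |p| = 1/2) (hq : |q| = 1/2) : p * q ≤ 1/4 := by
  have hp2 : p^2 = 1/4 := by rw [← sq_abs, hp]; norm_num
  have hq2 : q^2 = 1/4 := by rw [← sq_abs, hq]; norm_num
  nlinarith [sq_nonneg (p - q)]

lemma half_mul_eq {p q : ℝ} (hp : |p| = 1/2) (hq : |q| = 1/2) (h : p * q = 1/4) : q = p := by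
  have hp2 : p^2 = 1/4 := by rw [← sq_abs, hp]; norm_num
  have hq2 : q^2 = 1/4 := by rw [← sq_abs, hq]; norm_num
  have hpq : (p - q)^2 = 0 := by nlinarith
  have := pow_eq_zero_iff (n := 2) (by norm_num) |>.mp hpq
  linarith [sub_eq_zero.mp this]

lemma hull_eq_case {E : Type*} [AddCommGroup E] [Module ℝ E]
    {s : Set E} (G : E →ᵃ[ℝ] ℝ) {r : ℝ}
    (hle : ∀ y ∈ s, G y ≤ r)
    {x : E} (hx : x ∈ convexHull ℝ s) (hxr : G x = r) :
    x ∈ convexHull ℝ {y ∈ s | G y = r} := by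
  rw [_root_.convexHull_eq] at hx
  obtain ⟨ι, t, w, z, hw0, hw1, hzs, hcm⟩ := hx
  have hGd : ∀ v : E, G v = G.linear v + G 0 := fun v => congrFun G.decomp v
  have hGx : ∑ i ∈ t, w i * G (z i) = r := by
    rw [← hxr, ← hcm, t.centerMass_eq_of_sum_1 _ hw1, hGd, map_sum]
    have : ∀ i ∈ t, w i * G (z i) = G.linear (w i • z i) + w i * G 0 := by
      intro i _
      rw [hGd (z i), map_smul, smul_eq_mul]; ring
    rw [Finset.sum_congr rfl this, Finset.sum_add_distrib, ← Finset.sum_mul, hw1]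
    ring
  have hkey : ∀ i ∈ t, w i * G (z i) = w i * r := by
    refine (Finset.sum_eq_sum_iff_of_le (fun i hi => ?_)).1 ?_
    · exact mul_le_mul_of_nonneg_left (hle _ (hzs i hi)) (hw0 i hi)
    · rw [hGx, ← Finset.sum_mul, hw1, one_mul]
  rw [← hcm, ← Finset.centerMass_filter_ne_zero (t := t) (w := w) z]
  refine Finset.centerMass_mem_convexHull _ (fun i hi => hw0 i (Finset.mem_filter.1 hi).1) ?_ ?_
  · rw [Finset.sum_filter_ne_zero, hw1]; exact one_pos
  · intro i hi
    obtain ⟨hit, hwi⟩ := Finset.mem_filter.1 hi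
    exact ⟨hzs i hit, mul_left_cancel₀ hwi (hkey i hit)⟩

lemma face_lemma {E : Type*} [AddCommGroup E] [Module ℝ E]
    {s : Set E} (G : E →ᵃ[ℝ] ℝ) {r : ℝ}
    (hle : ∀ y ∈ s, G y ≤ r) :
    IsExtreme ℝ (convexHull ℝ s) (convexHull ℝ {y ∈ s | G y = r}) := by
  have hGd : ∀ v : E, G v = G.linear v + G 0 := fun v => congrFun G.decomp v
  have hPle : ∀ x ∈ convexHull ℝ s, G x ≤ r := by
    intro x hx
    have h : convexHull ℝ s ⊆ G ⁻¹' Set.Iic r :=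
      convexHull_min (fun y hy => hle y hy) ((convex_Iic r).affine_preimage G)
    exact h hx
  constructor
  · exact convexHull_mono (Set.sep_subset _ _)
  · intro x1 hx1 x2 hx2 z hz hzseg
    have hzr : G z = r := by
      have h : convexHull ℝ {y ∈ s | G y = r} ⊆ G ⁻¹' {r} :=
        convexHull_min (fun y hy => hy.2) ((convex_singleton r).affine_preimage G)
      exact h hz
    rw [openSegment_eq_image] at hzseg
    obtain ⟨θ, hθ, rfl⟩ := hzseg
    have h1 : G x1 ≤ r := hPle _ hx1
    have h2 : G x2 ≤ r := hPle _ hx2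
    have hzr' : G ((1 - θ) • x1 + θ • x2) = r := hzr
    have hcomb : (1 - θ) * G x1 + θ * G x2 = r := by
      rw [hGd, map_add, map_smul, map_smul] at hzr'
      rw [hGd x1, hGd x2, smul_eq_mul, smul_eq_mul] at *
      rw [← hzr']; ring
    obtain ⟨hθ0, hθ1⟩ := hθ
    have e1 : G x1 = r := by nlinarith
    have e2 : G x2 = r := by nlinarith
    exact hull_eq_case G hle hx1 e1

/-- If `m ≥ 3`, `a ∈ B_int`, `b ∈ B_half`, and `F` is the square face of the half-integer
cube through `b` in the two coordinate directions `i₁, i₂ ∉ S`, then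
`convexHull ℝ ({a} ∪ F)` is a face of the Delone polytope (free sum) of `D_{2m}^*`
centered at `u`, and `a` does not lie in the affine span of `F`; so this face is a
pyramid over a parallelogram with apex `a`. -/
theorem stmt_9 (m : ℕ) (hm : 3 ≤ m)
    (S : Finset (Fin (2 * m))) (hS : S.card = m)
    (u : EuclideanSpace ℝ (Fin (2 * m)))
    (huS : ∀ i ∈ S, ∃ k : ℤ, u i = (k : ℝ) + 1/2)
    (huI : ∀ i ∉ S, ∃ k : ℤ, u i = (k : ℝ))
    (Bhalf Bint : Set (EuclideanSpace ℝ (Fin (2 * m))))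
    (hBhalf : Bhalf = {x : EuclideanSpace ℝ (Fin (2 * m)) |
      (∀ i ∈ S, x i = u i) ∧ (∀ i ∉ S, |x i - u i| = 1/2)})
    (hBint : Bint = {x : EuclideanSpace ℝ (Fin (2 * m)) |
      (∀ i ∉ S, x i = u i) ∧ (∀ i ∈ S, |x i - u i| = 1/2)})
    (a : EuclideanSpace ℝ (Fin (2 * m))) (ha : a ∈ Bint)
    (b : EuclideanSpace ℝ (Fin (2 * m))) (hb : b ∈ Bhalf)
    (i₁ i₂ : Fin (2 * m)) (hi₁ : i₁ ∉ S) (hi₂ : i₂ ∉ S) (hi : i₁ ≠ i₂)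
    (F : Set (EuclideanSpace ℝ (Fin (2 * m))))
    (hF : F = {x ∈ Bhalf | ∀ k, k ≠ i₁ → k ≠ i₂ → x k = b k}) :
    IsExtreme ℝ (convexHull ℝ (Bint ∪ Bhalf)) (convexHull ℝ ({a} ∪ F)) ∧
    a ∉ affineSpan ℝ F := by
  have hm' : (3 : ℝ) ≤ (m : ℝ) := by exact_mod_cast hm
  obtain ⟨ha1, ha2⟩ : (∀ i ∉ S, a i = u i) ∧ (∀ i ∈ S, |a i - u i| = 1/2) := by
    rw [hBint] at ha; exact ha
  obtain ⟨hb1, hb2⟩ : (∀ i ∈ S, b i = u i) ∧ (∀ i ∉ S, |b i - u i| = 1/2) := by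
    rw [hBhalf] at hb; exact hb
  set cc : Fin (2*m) → ℝ := fun i =>
    if i ∈ S then 2*((m:ℝ)-2)*(a i - u i)
    else if i = i₁ ∨ i = i₂ then 0 else 2*(m:ℝ)*(b i - u i)
    with hcc
  set r : ℝ := (m:ℝ) * ((m:ℝ) - 2) / 2 with hr
  set G := coordComb cc u with hG
  have hpair : ({i₁, i₂} : Finset (Fin (2*m))) ⊆ Sᶜ := by
    intro j hj
    rcases Finset.mem_insert.1 hj with rfl | hj
    · simpa using hi₁
    · rw [Finset.mem_singleton] at hj; subst hj; simpa using hi₂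
  have hcardc : (Sᶜ : Finset (Fin (2*m))).card = m := by
    rw [Finset.card_compl, Fintype.card_fin, hS]; omega
  have hcards : ((Sᶜ \ {i₁, i₂} : Finset (Fin (2*m)))).card = m - 2 := by
    rw [Finset.card_sdiff, Finset.inter_eq_left.2 hpair, hcardc, Finset.card_pair hi]
  have hcards' : (((Sᶜ \ {i₁, i₂} : Finset (Fin (2*m)))).card : ℝ) = (m:ℝ) - 2 := by
    rw [hcards, Nat.cast_sub (by omega)]; norm_num
  have hmemsd : ∀ j ∈ (Sᶜ \ {i₁, i₂} : Finset (Fin (2*m))), j ∉ S ∧ j ≠ i₁ ∧ j ≠ i₂ := by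
    intro j hj
    obtain ⟨hj1, hj2⟩ := Finset.mem_sdiff.1 hj
    refine ⟨Finset.mem_compl.1 hj1, ?_⟩
    simpa [not_or] using hj2
  have hsplit : ∀ x : EuclideanSpace ℝ (Fin (2*m)),
      G x = ∑ j ∈ S, cc j * (x j - u j)
        + (∑ j ∈ Sᶜ \ {i₁, i₂}, cc j * (x j - u j)) := by
    intro x
    rw [hG, coordComb_apply, ← Finset.sum_add_sum_compl S, ← Finset.sum_sdiff hpair]
    have h0 : ∑ j ∈ ({i₁, i₂} : Finset (Fin (2*m))), cc j * (x j - u j) = 0 := by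
      apply Finset.sum_eq_zero
      intro j hj
      have hjS : j ∉ S := by simpa using hpair hj
      have hj' : j = i₁ ∨ j = i₂ := by simpa using hj
      simp [hcc, hjS, hj']
    rw [h0]
    ring
  have hccS : ∀ j ∈ S, cc j = 2*((m:ℝ)-2)*(a j - u j) := by
    intro j hj; simp [hcc, hj]
  have hccO : ∀ j ∈ (Sᶜ \ {i₁, i₂} : Finset (Fin (2*m))), cc j = 2*(m:ℝ)*(b j - u j) := by
    intro j hj
    obtain ⟨hjS, hj1, hj2⟩ := hmemsd j hj
    simp [hcc, hjS, hj1, hj2]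
  -- value and inequality on Bint
  have hGint : ∀ x ∈ Bint, G x = ∑ j ∈ S, 2*((m:ℝ)-2)*((a j - u j)*(x j - u j)) := by
    intro x hx
    rw [hBint] at hx
    rw [hsplit]
    have h2 : ∑ j ∈ Sᶜ \ {i₁, i₂}, cc j * (x j - u j) = 0 := by
      apply Finset.sum_eq_zero
      intro j hj
      rw [hx.1 j (hmemsd j hj).1]
      ring
    rw [h2, add_zero]
    exact Finset.sum_congr rfl fun j hj => by rw [hccS j hj]; ring
  have hle_int : ∀ x ∈ Bint, G x ≤ r := by
    intro x hx
    have hx2 : ∀ i ∈ S, |x i - u i| = 1/2 := by rw [hBint] at hx; exact hx.2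
    rw [hGint x hx]
    calc ∑ j ∈ S, 2*((m:ℝ)-2)*((a j - u j)*(x j - u j))
        ≤ ∑ _j ∈ S, ((m:ℝ)-2)/2 := by
          refine Finset.sum_le_sum fun j hj => ?_
          have h14 := half_mul_le (ha2 j hj) (hx2 j hj)
          nlinarith
      _ = r := by rw [Finset.sum_const, hS, nsmul_eq_mul, hr]; ring
  have heq_int : ∀ x ∈ Bint, G x = r → x = a := by
    intro x hx hxr
    have hx1 : ∀ i ∉ S, x i = u i := by rw [hBint] at hx; exact hx.1
    have hx2 : ∀ i ∈ S, |x i - u i| = 1/2 := by rw [hBint] at hx; exact hx.2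
    have hterm : ∀ j ∈ S, 2*((m:ℝ)-2)*((a j - u j)*(x j - u j)) = ((m:ℝ)-2)/2 := by
      refine (Finset.sum_eq_sum_iff_of_le (fun j hj => ?_)).1 ?_
      · have h14 := half_mul_le (ha2 j hj) (hx2 j hj)
        nlinarith
      · rw [← hGint x hx, hxr, Finset.sum_const, hS, nsmul_eq_mul, hr]; ring
    ext j
    by_cases hj : j ∈ S
    · have hne : (2*((m:ℝ)-2)) ≠ 0 := ne_of_gt (by nlinarith)
      have h' : 2*((m:ℝ)-2)*((a j - u j)*(x j - u j)) = 2*((m:ℝ)-2)*(1/4) := by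
        rw [hterm j hj]; ring
      have h14 : (a j - u j)*(x j - u j) = 1/4 := mul_left_cancel₀ hne h'
      have := half_mul_eq (ha2 j hj) (hx2 j hj) h14
      linarith
    · rw [hx1 j hj, (ha1 j hj).symm]
  -- value and inequality on Bhalf
  have hGhalf : ∀ x ∈ Bhalf,
      G x = ∑ j ∈ Sᶜ \ {i₁, i₂}, 2*(m:ℝ)*((b j - u j)*(x j - u j)) := by
    intro x hx
    rw [hBhalf] at hx
    rw [hsplit]
    have h1 : ∑ j ∈ S, cc j * (x j - u j) = 0 := by
      apply Finset.sum_eq_zero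
      intro j hj
      rw [hx.1 j hj]
      ring
    rw [h1, zero_add]
    exact Finset.sum_congr rfl fun j hj => by rw [hccO j hj]; ring
  have hle_half : ∀ x ∈ Bhalf, G x ≤ r := by
    intro x hx
    have hx2 : ∀ i ∉ S, |x i - u i| = 1/2 := by rw [hBhalf] at hx; exact hx.2
    rw [hGhalf x hx]
    calc ∑ j ∈ Sᶜ \ {i₁, i₂}, 2*(m:ℝ)*((b j - u j)*(x j - u j))
        ≤ ∑ _j ∈ Sᶜ \ {i₁, i₂}, (m:ℝ)/2 := by
          refine Finset.sum_le_sum fun j hj => ?_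
          have hjS := (hmemsd j hj).1
          have h14 := half_mul_le (hb2 j hjS) (hx2 j hjS)
          nlinarith
      _ = r := by rw [Finset.sum_const, nsmul_eq_mul, hcards', hr]; ring
  have heq_half : ∀ x ∈ Bhalf, G x = r → x ∈ F := by
    intro x hx hxr
    have hx1 : ∀ i ∈ S, x i = u i := by rw [hBhalf] at hx; exact hx.1
    have hx2 : ∀ i ∉ S, |x i - u i| = 1/2 := by rw [hBhalf] at hx; exact hx.2
    have hterm : ∀ j ∈ (Sᶜ \ {i₁, i₂} : Finset (Fin (2*m))),
        2*(m:ℝ)*((b j - u j)*(x j - u j)) = (m:ℝ)/2 := by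
      refine (Finset.sum_eq_sum_iff_of_le (fun j hj => ?_)).1 ?_
      · have hjS := (hmemsd j hj).1
        have h14 := half_mul_le (hb2 j hjS) (hx2 j hjS)
        nlinarith
      · rw [← hGhalf x hx, hxr, Finset.sum_const, nsmul_eq_mul, hcards', hr]; ring
    rw [hF]
    refine ⟨hx, fun k hk1 hk2 => ?_⟩
    by_cases hk : k ∈ S
    · rw [hx1 k hk, (hb1 k hk).symm]
    · have hkmem : k ∈ (Sᶜ \ {i₁, i₂} : Finset (Fin (2*m))) := by
        rw [Finset.mem_sdiff, Finset.mem_compl]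
        exact ⟨hk, by simp [hk1, hk2]⟩
      have hne : (2*(m:ℝ)) ≠ 0 := ne_of_gt (by nlinarith)
      have h' : 2*(m:ℝ)*((b k - u k)*(x k - u k)) = 2*(m:ℝ)*(1/4) := by
        rw [hterm k hkmem]; ring
      have h14 : (b k - u k)*(x k - u k) = 1/4 := mul_left_cancel₀ hne h'
      have := half_mul_eq (hb2 k hk) (hx2 k hk) h14
      linarith
  -- value r is attained on {a} ∪ F
  have hGa : G a = r := by
    rw [hGint a ha]
    have : ∀ j ∈ S, 2*((m:ℝ)-2)*((a j - u j)*(a j - u j)) = ((m:ℝ)-2)/2 := by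
      intro j hj
      have hsq : (a j - u j)^2 = 1/4 := by rw [← sq_abs, ha2 j hj]; norm_num
      nlinarith
    rw [Finset.sum_congr rfl this, Finset.sum_const, hS, nsmul_eq_mul, hr]; ring
  have hFsub : F ⊆ Bhalf := by rw [hF]; exact Set.sep_subset _ _
  have hGF : ∀ x ∈ F, G x = r := by
    intro x hxF
    have hx := hFsub hxF
    rw [hGhalf x hx]
    have hxk : ∀ k, k ≠ i₁ → k ≠ i₂ → x k = b k := by rw [hF] at hxF; exact hxF.2
    have : ∀ j ∈ (Sᶜ \ {i₁, i₂} : Finset (Fin (2*m))),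
        2*(m:ℝ)*((b j - u j)*(x j - u j)) = (m:ℝ)/2 := by
      intro j hj
      obtain ⟨hjS, hj1, hj2⟩ := hmemsd j hj
      rw [hxk j hj1 hj2]
      have hsq : (b j - u j)^2 = 1/4 := by rw [← sq_abs, hb2 j hjS]; norm_num
      nlinarith
    rw [Finset.sum_congr rfl this, Finset.sum_const, nsmul_eq_mul, hcards', hr]; ring
  -- global inequality and the face identification
  have hle : ∀ y ∈ Bint ∪ Bhalf, G y ≤ r := by
    rintro y (hy | hy)
    · exact hle_int y hy
    · exact hle_half y hy
  have hT : {y ∈ Bint ∪ Bhalf | G y = r} = {a} ∪ F := by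
    ext y
    constructor
    · rintro ⟨hy | hy, hyr⟩
      · exact Or.inl (heq_int y hy hyr)
      · exact Or.inr (heq_half y hy hyr)
    · rintro (rfl | hyF)
      · exact ⟨Or.inl ha, hGa⟩
      · exact ⟨Or.inr (hFsub hyF), hGF y hyF⟩
  constructor
  · have := face_lemma G hle
    rwa [hT] at this
  -- a is not in the affine span of F
  · intro hmem
    obtain ⟨j₀, hj₀⟩ : ∃ j, j ∈ S := by
      have : 0 < S.card := by omega
      exact Finset.card_pos.1 this
    set e := coordComb (fun i => if i = j₀ then 1 else 0) u with he
    have he_apply : ∀ x : EuclideanSpace ℝ (Fin (2*m)), e x = x j₀ - u j₀ := by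
      intro x
      rw [he, coordComb_apply]
      simp [ite_mul]
    have hsub : F ⊆ (AffineSubspace.comap e (affineSpan ℝ ({(0:ℝ)} : Set ℝ)) :
        AffineSubspace ℝ (EuclideanSpace ℝ (Fin (2*m)))) := by
      intro x hxF
      rw [SetLike.mem_coe, AffineSubspace.mem_comap,
        AffineSubspace.mem_affineSpan_singleton, he_apply]
      have hx1 : x j₀ = u j₀ := by
        have := hFsub hxF
        rw [hBhalf] at this
        exact this.1 j₀ hj₀
      rw [hx1]; ring
    have hale := (affineSpan_le.2 hsub) hmem
    have h0 : e a = 0 := by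
      have h1 : e a ∈ affineSpan ℝ ({(0:ℝ)} : Set ℝ) := AffineSubspace.mem_comap.1 hale
      rwa [AffineSubspace.mem_affineSpan_singleton] at h1
    rw [he_apply] at h0
    have := ha2 j₀ hj₀
    rw [h0] at this
    norm_num at this
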